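/- Assume Fix J_i ≠ ∅ for each i. Then ∩_{i=1}^m Fix J_i ≠ ∅ if and only if F_1 = F_2 = ⋯ = F_m ≠ ∅. -/

import Mathlib

open Pointwise InnerProductSpace

variable {X : Type*} [NormedAddCommGroup X] [InnerProductSpace ℝ X]
variable {m : ℕ} [NeZero m]

/-- A set-valued operator `A : X ⇉ X` is monotone. -/
def SVMonotone (A : X → Set X) : Prop :=
  ∀ ⦃x y u v : X⦄, u ∈ A x → v ∈ A y → 0 ≤ ⟪x - y, u - v⟫_ℝ

/-- A set-valued operator is maximally monotone. -/
def SVMaxMonotone (A : X → Set X) : Prop :=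
  SVMonotone A ∧ ∀ x u : X, (∀ y v, v ∈ A y → 0 ≤ ⟪x - y, u - v⟫_ℝ) → u ∈ A x

/-- `J` is the (single-valued, full-domain) resolvent `(Id + A)⁻¹` of `A`. -/
def IsResolventOf (J : X → X) (A : X → Set X) : Prop :=
  ∀ x y : X, J y = x ↔ y - x ∈ A x

/-- The cyclic composition `J_i ∘ J_{i-1} ∘ ⋯ ∘ J_1 ∘ J_m ∘ ⋯ ∘ J_{i+1}`
(indices understood cyclically in `Fin m`, `0`-based). -/
def cyclicComp (J : Fin m → X → X) (i : Fin m) : X → X :=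
  fun x => (List.range m).foldl (fun y (k : ℕ) => J (i + 1 + Fin.ofNat m k) y) x

/-- `F i` : the fixed point set of the cyclic composition ending with `J i`. -/
def cycFix (J : Fin m → X → X) (i : Fin m) : Set X :=
  {x | cyclicComp J i x = x}

/-- `(z_1, …, z_m)` is a cycle: `z_{i} = J_i z_{i-1}` cyclically. -/
def IsCycle (J : Fin m → X → X) (z : Fin m → X) : Prop :=
  ∀ i : Fin m, z i = J i (z (i - 1))

/-- The circular right-shift operator on `X^m`. -/
def shiftR (z : Fin m → X) : Fin m → X := fun i => z (i - 1)

/-- The coordinatewise resolvent `J_A` on `X^m`. -/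
def resProd (J : Fin m → X → X) (z : Fin m → X) : Fin m → X := fun i => J i (z i)

/-- The product operator `A = A_1 × ⋯ × A_m` on `X^m`. -/
def prodOp (A : Fin m → X → Set X) : (Fin m → X) → Set (Fin m → X) :=
  fun z => {u | ∀ i, u i ∈ A i (z i)}

/-- The set of cycles `Z = Fix (J_A ∘ R)`. -/
def cycleSet (J : Fin m → X → X) : Set (Fin m → X) :=
  {z | resProd J (shiftR z) = z}

lemma res_firm {A : X → Set X} {J : X → X} (hA : SVMonotone A) (hJ : IsResolventOf J A)
    (u v : X) : ‖J u - J v‖^2 ≤ ⟪J u - J v, u - v⟫_ℝ := by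
  have h1 : u - J u ∈ A (J u) := (hJ (J u) u).mp rfl
  have h2 : v - J v ∈ A (J v) := (hJ (J v) v).mp rfl
  have h := hA h1 h2
  have hh : (u - J u) - (v - J v) = (u - v) - (J u - J v) := by abel
  rw [hh, inner_sub_right] at h
  have hs : ⟪J u - J v, J u - J v⟫_ℝ = ‖J u - J v‖^2 := real_inner_self_eq_norm_sq _
  linarith

lemma res_nonexp {A : X → Set X} {J : X → X} (hA : SVMonotone A) (hJ : IsResolventOf J A)
    (u v : X) : ‖J u - J v‖ ≤ ‖u - v‖ := by
  have hf := res_firm hA hJ u v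
  have hcs := real_inner_le_norm (J u - J v) (u - v)
  nlinarith [norm_nonneg (J u - J v), norm_nonneg (u - v)]

lemma res_eq_case {A : X → Set X} {J : X → X} (hA : SVMonotone A) (hJ : IsResolventOf J A)
    {u v : X} (h : ‖u - v‖ ≤ ‖J u - J v‖) : J u - J v = u - v := by
  have hf := res_firm hA hJ u v
  have hn := res_nonexp hA hJ u v
  have heq : ‖J u - J v‖ = ‖u - v‖ := le_antisymm hn h
  have h0 : ‖(u - v) - (J u - J v)‖^2 ≤ 0 := by
    rw [heq] at hf
    rw [norm_sub_sq_real, real_inner_comm, heq]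
    nlinarith
  have h1 : ‖(u - v) - (J u - J v)‖ = 0 := by
    nlinarith [norm_nonneg ((u - v) - (J u - J v))]
  rw [norm_eq_zero, sub_eq_zero] at h1
  exact h1.symm

open Fin.NatCast

def seqJ (J : Fin m → X → X) (a : Fin m) (x : X) : ℕ → X
  | 0 => x
  | k+1 => J (a + (k : Fin m)) (seqJ J a x k)

lemma foldl_map_eq_seqJ (J : Fin m → X → X) (a : Fin m) (x : X) (n : ℕ) :
    List.foldl (fun y k => J (a + k) y) x ((List.range n).map (fun k : ℕ => (Nat.cast k : Fin m))) =
      seqJ J a x n := by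
  induction n with
  | zero => rfl
  | succ n ih => rw [List.range_succ, List.map_append, List.foldl_append, ih]; rfl

lemma foldl_eq_seqJ (J : Fin m → X → X) (a : Fin m) (x : X) (n : ℕ) :
    (List.range n).foldl (fun y k => J (a + (k : Fin m)) y) x = seqJ J a x n := by
  have h : (do let a ← List.range n; pure ((a : Fin m))) =
      (List.range n).map (fun k : ℕ => (Nat.cast k : Fin m)) := by
    simp only [List.pure_def, List.bind_eq_flatMap]
    induction n with
    | zero => rfl
    | succ n ihn => rw [List.range_succ] <;> simp_all
  rw [show ((List.range n).foldl (fun y k => J (a + (k : Fin m)) y) x) =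
    List.foldl (fun y k => J (a + k) y) x (do let a ← List.range n; pure ((a : Fin m))) from rfl]
  rw [h, foldl_map_eq_seqJ]

lemma mem_cycFix_iff (J : Fin m → X → X) (i : Fin m) (x : X) :
    x ∈ cycFix J i ↔ seqJ J (i + 1) x m = x := by
  unfold cycFix cyclicComp
  rw [Set.mem_setOf_eq, ← foldl_map_eq_seqJ, List.foldl_map]
  exact Iff.rfl

lemma seqJ_add (J : Fin m → X → X) (a : Fin m) (x : X) (k j : ℕ) :
    seqJ J a x (k + j) = seqJ J (a + (k : Fin m)) (seqJ J a x k) j := by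
  induction j with
  | zero => rfl
  | succ j ih =>
      show seqJ J a x ((k + j) + 1) = _
      rw [seqJ, ih, seqJ]
      congr 1
      push_cast
      abel

section main
variable {A : Fin m → X → Set X} {J : Fin m → X → X}

lemma seqJ_norm_antitone (hA : ∀ i, SVMonotone (A i)) (hJ : ∀ i, IsResolventOf (J i) (A i))
    (a : Fin m) (x y : X) {j k : ℕ} (h : j ≤ k) :
    ‖seqJ J a x k - seqJ J a y k‖ ≤ ‖seqJ J a x j - seqJ J a y j‖ := by
  induction k with
  | zero => simp_all
  | succ k ih =>
      rcases Nat.lt_or_ge j (k+1) with hlt | hge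
      · have h1 : ‖seqJ J a x (k+1) - seqJ J a y (k+1)‖ ≤ ‖seqJ J a x k - seqJ J a y k‖ :=
          res_nonexp (hA _) (hJ _) _ _
        exact h1.trans (ih (Nat.lt_succ_iff.mp hlt))
      · have : j = k + 1 := le_antisymm h hge
        subst this; exact le_rfl

lemma seqJ_parallel (hA : ∀ i, SVMonotone (A i)) (hJ : ∀ i, IsResolventOf (J i) (A i))
    (a : Fin m) {x y : X} (hx : seqJ J a x m = x) (hy : seqJ J a y m = y) :
    ∀ k, k ≤ m → seqJ J a x k - seqJ J a y k = x - y := by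
  have hnorm : ∀ k, k ≤ m → ‖seqJ J a x k - seqJ J a y k‖ = ‖x - y‖ := by
    intro k hk
    have h1 := seqJ_norm_antitone hA hJ a x y (Nat.zero_le k)
    have h2 := seqJ_norm_antitone hA hJ a x y hk
    rw [hx, hy] at h2
    simp only [seqJ] at h1
    exact le_antisymm h1 h2
  intro k hk
  induction k with
  | zero => rfl
  | succ k ih =>
      have hk' : k ≤ m := Nat.le_of_succ_le hk
      have ihe := ih hk'
      have heq : ‖seqJ J a x k - seqJ J a y k‖ ≤
          ‖J (a + (k : Fin m)) (seqJ J a x k) - J (a + (k : Fin m)) (seqJ J a y k)‖ := by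
        have e1 := hnorm k hk'
        have e2 := hnorm (k+1) hk
        simp only [seqJ] at e2
        rw [e1, e2]
      have := res_eq_case (hA _) (hJ _) heq
      show J (a + (k : Fin m)) (seqJ J a x k) - J (a + (k : Fin m)) (seqJ J a y k) = x - y
      rw [this, ihe]

lemma seqJ_chainpoint (a : Fin m) (p : X) (hp : seqJ J a p m = p) {k : ℕ} (hk : k ≤ m) :
    seqJ J (a + (k : Fin m)) (seqJ J a p k) m = seqJ J a p k := by
  have h1 : seqJ J (a + (k : Fin m)) (seqJ J a p k) (m - k) = p := by
    rw [← seqJ_add, Nat.add_sub_cancel' hk, hp]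
  have h2 : seqJ J (a + (k : Fin m)) (seqJ J a p k) m
      = seqJ J (a + (k : Fin m)) (seqJ J a p k) ((m - k) + k) := by
    rw [Nat.sub_add_cancel hk]
  rw [h2, seqJ_add, h1]
  congr 1
  have hc : ((m - k : ℕ) : Fin m) = ((m : ℕ) : Fin m) - ((k : ℕ) : Fin m) := by
    exact eq_sub_of_add_eq (by rw [← Nat.cast_add, Nat.sub_add_cancel hk])
  rw [hc, Fin.natCast_self]
  abel

lemma nonneg_of_nat_bound {C r : ℝ} (h : ∀ t : ℕ, 0 ≤ C + t * r) : 0 ≤ r := by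
  by_contra hr
  push_neg at hr
  obtain ⟨t, ht⟩ := exists_nat_gt (C / (-r))
  have h1 := h t
  have hrpos : 0 < -r := by linarith
  rw [div_lt_iff₀ hrpos] at ht
  nlinarith

end main

/-- If each `Fix J_i ≠ ∅`, then `⋂ Fix J_i ≠ ∅` iff `F_1 = F_2 = ⋯ = F_m ≠ ∅`. -/
theorem iInter_fix_nonempty_iff_cycFix_all_equal
    (A : Fin m → X → Set X) (J : Fin m → X → X)
    (hA : ∀ i, SVMaxMonotone (A i)) (hJ : ∀ i, IsResolventOf (J i) (A i))
    (hfix : ∀ i : Fin m, {x : X | J i x = x}.Nonempty) :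
    (⋂ i : Fin m, {x : X | J i x = x}).Nonempty ↔
      (∀ i j : Fin m, cycFix J i = cycFix J j) ∧ (cycFix J 0).Nonempty := by
  have hA1 : ∀ i, SVMonotone (A i) := fun i => (hA i).1
  constructor
  · rintro ⟨x, hx⟩
    simp only [Set.mem_iInter, Set.mem_setOf_eq] at hx
    have hconst : ∀ (a : Fin m) (k : ℕ), seqJ J a x k = x := by
      intro a k
      induction k with
      | zero => rfl
      | succ k ih => show J _ (seqJ J a x k) = x; rw [ih, hx]
    have hcommon : ∀ i : Fin m, cycFix J i = {p : X | ∀ j, J j p = p} := by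
      intro i
      ext p
      rw [mem_cycFix_iff, Set.mem_setOf_eq]
      constructor
      · intro hp
        have hxf : seqJ J (i+1) x m = x := hconst _ _
        have hpar := seqJ_parallel hA1 hJ (i+1) hp hxf
        have hpk : ∀ k, k ≤ m → seqJ J (i+1) p k = p := by
          intro k hk
          have h1 := hpar k hk
          rw [hconst (i+1) k] at h1
          have : seqJ J (i+1) p k = p - x + x := by rw [← h1]; abel
          rw [this]; abel
        intro j
        set k := (j - (i+1)).val with hkdef
        have hk : k < m := (j - (i+1)).isLt
        have e0 : seqJ J (i+1) p k = p := hpk k hk.le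
        have e1 : seqJ J (i+1) p (k+1) = p := hpk (k+1) hk
        have e2 : J ((i+1) + (k : Fin m)) (seqJ J (i+1) p k) = p := e1
        rw [e0] at e2
        rwa [show (i+1) + (k : Fin m) = j from by
          rw [hkdef, Fin.cast_val_eq_self]; abel] at e2
      · intro hp
        have : ∀ k, seqJ J (i+1) p k = p := by
          intro k
          induction k with
          | zero => rfl
          | succ k ih => show J _ (seqJ J (i+1) p k) = p; rw [ih, hp]
        exact this m
    refine ⟨fun i j => by rw [hcommon i, hcommon j], ⟨x, ?_⟩⟩
    rw [hcommon 0]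
    exact hx
  · rintro ⟨hall, p, hp0⟩
    have hp : seqJ J ((0 : Fin m) + 1) p m = p := (mem_cycFix_iff J 0 p).mp hp0
    set a : Fin m := (0 : Fin m) + 1 with ha
    have halls : ∀ (i j : Fin m) (q : X), seqJ J i q m = q → seqJ J j q m = q := by
      intro i j q hq
      have h1 : q ∈ cycFix J (i - 1) := by
        rw [mem_cycFix_iff, show i - 1 + 1 = i from by abel]
        exact hq
      rw [hall (i-1) (j-1)] at h1
      rw [mem_cycFix_iff, show j - 1 + 1 = j from by abel] at h1
      exact h1
    have hmemF : ∀ q, seqJ J a q m = q → ∀ k, k ≤ m →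
        seqJ J a (seqJ J a q k) m = seqJ J a q k := by
      intro q hq k hk
      exact halls _ _ _ (seqJ_chainpoint a q hq hk)
    have hkey : ∀ k, k ≤ m → seqJ J a p k = p := by
      intro k hk
      set g : X := seqJ J a p k - p with hg
      have htrans : ∀ t : ℕ, seqJ J a (p + (t : ℝ) • g) m = p + (t : ℝ) • g := by
        intro t
        induction t with
        | zero => simpa using hp
        | succ t ih =>
            have hpar := seqJ_parallel hA1 hJ a ih hp k hk
            have e : seqJ J a (p + (t : ℝ) • g) k = p + ((t : ℕ) + 1 : ℝ) • g := by
              have h2 : seqJ J a (p + (t : ℝ) • g) k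
                  = seqJ J a p k + ((p + (t : ℝ) • g) - p) := by
                rw [← hpar]; abel
              rw [h2, hg]
              module
            have h3 := hmemF _ ih k hk
            rw [e] at h3
            convert h3 using 3 <;> push_cast <;> ring
      have hseq : ∀ (t : ℕ) (j : ℕ), j ≤ m →
          seqJ J a (p + (t : ℝ) • g) j = seqJ J a p j + (t : ℝ) • g := by
        intro t j hj
        have h1 := seqJ_parallel hA1 hJ a (htrans t) hp j hj
        have : seqJ J a (p + (t : ℝ) • g) j = seqJ J a p j + ((p + (t : ℝ) • g) - p) := by
          rw [← h1]; abel
        rw [this]; abel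
      have hgc : ∀ j : ℕ, j + 1 ≤ m →
          0 ≤ ⟪g, seqJ J a p j - seqJ J a p (j+1)⟫_ℝ := by
        intro j hj
        obtain ⟨b, hb⟩ := hfix (a + (j : Fin m))
        have hb0 : (0 : X) ∈ A (a + (j : Fin m)) b := by
          have := (hJ _ b b).mp hb
          rwa [sub_self] at this
        apply nonneg_of_nat_bound
          (C := ⟪seqJ J a p (j+1) - b, seqJ J a p j - seqJ J a p (j+1)⟫_ℝ)
        intro t
        have hc : seqJ J a p j - seqJ J a p (j+1)
            ∈ A (a + (j : Fin m)) (seqJ J a p (j+1) + (t : ℝ) • g) := by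
          have hstep : J (a + (j : Fin m)) (seqJ J a (p + (t : ℝ) • g) j)
              = seqJ J a (p + (t : ℝ) • g) (j+1) := rfl
          rw [hseq t j (Nat.le_of_succ_le hj), hseq t (j+1) hj] at hstep
          have h4 := (hJ _ _ _).mp hstep
          have h5 : (seqJ J a p j + (t : ℝ) • g) - (seqJ J a p (j+1) + (t : ℝ) • g)
              = seqJ J a p j - seqJ J a p (j+1) := by abel
          rwa [h5] at h4
        have hm := hA1 _ hc hb0
        rw [sub_zero] at hm
        have h6 : (seqJ J a p (j+1) + (t : ℝ) • g) - b
            = (seqJ J a p (j+1) - b) + (t : ℝ) • g := by abel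
        rw [h6, inner_add_left, real_inner_smul_left] at hm
        linarith
      have hsum : ∑ j ∈ Finset.range k, (seqJ J a p j - seqJ J a p (j+1))
          = p - seqJ J a p k := by
        have := Finset.sum_range_sub' (f := fun j => seqJ J a p j) (n := k)
        simpa [seqJ.eq_1] using this
      have h0 : (0 : ℝ) ≤ ⟪g, p - seqJ J a p k⟫_ℝ := by
        rw [← hsum, inner_sum]
        apply Finset.sum_nonneg
        intro j hj
        exact hgc j (Nat.succ_le_of_lt ((Finset.mem_range.mp hj).trans_le hk))
      have h7 : p - seqJ J a p k = -g := by rw [hg]; abel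
      rw [h7, inner_neg_right, real_inner_self_eq_norm_sq] at h0
      have h8 : ‖g‖ = 0 := by nlinarith [norm_nonneg g]
      rw [norm_eq_zero] at h8
      have : seqJ J a p k - p = 0 := by rw [← hg, h8]
      rw [sub_eq_zero] at this
      exact this
    refine ⟨p, ?_⟩
    simp only [Set.mem_iInter, Set.mem_setOf_eq]
    intro i
    set k := (i - a).val with hkdef
    have hk : k < m := (i - a).isLt
    have e0 : seqJ J a p k = p := hkey k hk.le
    have e1 : seqJ J a p (k+1) = p := hkey (k+1) hk
    have e2 : J (a + (k : Fin m)) (seqJ J a p k) = p := e1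
    rw [e0] at e2
    rwa [show a + (k : Fin m) = i from by rw [hkdef, Fin.cast_val_eq_self]; abel] at e2
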